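/- Let G = BS(1,2) be the presented group on generators a, t with the single relator t a t⁻¹ a⁻². For every nontrivial normal subgroup N of G, the quotient G/N is either abelian, or there exists a finite symmetric generating set B of G/N such that the geodesic language Geo(G/N, B) is not piecewise excluding. -/

import Mathlib

/-- `w` is a word over the alphabet `A`: every letter of `w` lies in `A`. -/
def IsWordOver {G : Type*} (A : Finset G) (w : List G) : Prop :=
  ∀ x ∈ w, x ∈ A

/-- `A` is a finite symmetric (inverse-closed) generating set of the group `G`. -/
def IsSymmGen {G : Type*} [Group G] (A : Finset G) : Prop :=
  Subgroup.closure (A : Set G) = ⊤ ∧ ∀ a ∈ A, a⁻¹ ∈ A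

/-- `w` is a geodesic word over `A`: no word over `A` of strictly smaller length
evaluates to the same element of `G`. -/
def IsGeodesic {G : Type*} [Group G] (A : Finset G) (w : List G) : Prop :=
  IsWordOver A w ∧
    ∀ v : List G, IsWordOver A v → v.prod = w.prod → w.length ≤ v.length

/-- The geodesic language of `G` over `A`. -/
def Geo {G : Type*} [Group G] (A : Finset G) : Set (List G) :=
  {w | IsGeodesic A w}

/-- A language `L` of words over `A` is piecewise excluding if there is a finite set `F`
of words over `A` such that a word `w` over `A` lies in `L` iff no element of `F` is a
piecewise subword (i.e. a not-necessarily-contiguous subsequence) of `w`. -/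
def PiecewiseExcluding {G : Type*} (A : Finset G) (L : Set (List G)) : Prop :=
  ∃ F : Finset (List G), (∀ u ∈ F, IsWordOver A u) ∧
    ∀ w : List G, IsWordOver A w → (w ∈ L ↔ ∀ u ∈ F, ¬ List.Sublist u w)

/-- The single relator of `BS(1,2) = ⟨a, t ∣ t a t⁻¹ a⁻²⟩`, with `a` the image of `0`
and `t` the image of `1`. -/
def bs12Rels : Set (FreeGroup (Fin 2)) :=
  {FreeGroup.of 1 * FreeGroup.of 0 * (FreeGroup.of 1)⁻¹ * ((FreeGroup.of 0) ^ 2)⁻¹}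


section Core0
variable {Q : Type*} [Group Q] {a t : Q}

private lemma zpow_cancel (c : Q) {m n : ℤ} (h : c ^ m = c ^ n) : c ^ (m - n) = 1 := by
  rw [zpow_sub, h]; group

variable (rel : t * a * t⁻¹ = a * a) (ha : a ≠ 1)

include rel

private lemma hs2 : (t⁻¹*a*t) * (t⁻¹*a*t) = a := by
  have h : (t⁻¹*a*t) * (t⁻¹*a*t) = t⁻¹*(a*a)*t := by group
  rw [h, ← rel]; group

private lemma hcc : (t⁻¹*(t⁻¹*a*t)*t) * (t⁻¹*(t⁻¹*a*t)*t) = t⁻¹*a*t := by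
  have h : (t⁻¹*(t⁻¹*a*t)*t) * (t⁻¹*(t⁻¹*a*t)*t) = t⁻¹*((t⁻¹*a*t)*(t⁻¹*a*t))*t := by group
  rw [h, hs2 rel]

private lemma hconj (k : ℤ) :
    t * (t⁻¹*(t⁻¹*a*t)*t) ^ k * t⁻¹ = (t⁻¹*(t⁻¹*a*t)*t) ^ (2*k) := by
  have h1 : t * (t⁻¹*(t⁻¹*a*t)*t) * t⁻¹ = (t⁻¹*(t⁻¹*a*t)*t) * (t⁻¹*(t⁻¹*a*t)*t) := by
    have h : t * (t⁻¹*(t⁻¹*a*t)*t) * t⁻¹ = t⁻¹*a*t := by group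
    rw [h]; exact (hcc rel).symm
  calc t * (t⁻¹*(t⁻¹*a*t)*t) ^ k * t⁻¹ = (t * (t⁻¹*(t⁻¹*a*t)*t) * t⁻¹) ^ k := by rw [conj_zpow]
    _ = ((t⁻¹*(t⁻¹*a*t)*t) * (t⁻¹*(t⁻¹*a*t)*t)) ^ k := congrArg (fun z => z ^ k) h1
    _ = (t⁻¹*(t⁻¹*a*t)*t) ^ (2*k) := by rw [← zpow_two, ← zpow_mul]

private lemma hconj' (k : ℤ) :
    t⁻¹ * (t⁻¹*(t⁻¹*a*t)*t) ^ (2*k) * t = (t⁻¹*(t⁻¹*a*t)*t) ^ k := by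
  rw [← hconj rel k]; group

private lemma hac : a = (t⁻¹*(t⁻¹*a*t)*t) ^ (4:ℤ) := by
  have h4 : (t⁻¹*(t⁻¹*a*t)*t) ^ (4:ℤ)
      = ((t⁻¹*(t⁻¹*a*t)*t)*(t⁻¹*(t⁻¹*a*t)*t))*((t⁻¹*(t⁻¹*a*t)*t)*(t⁻¹*(t⁻¹*a*t)*t)) := by
    rw [show (4:ℤ) = 2+2 by norm_num, zpow_add, zpow_two]
  rw [h4, hcc rel, hs2 rel]

include ha

private lemma hC4 : (t⁻¹*(t⁻¹*a*t)*t) ^ (4:ℤ) = 1 → False := fun h => ha (by rw [hac rel, h])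

private lemma hC2 : (t⁻¹*(t⁻¹*a*t)*t) ^ (2:ℤ) = 1 → False := by
  intro h
  apply hC4 rel ha
  rw [show (4:ℤ) = 2*2 by norm_num, zpow_mul, h, one_zpow]

private lemma Kt (k : ℤ) : t ≠ (t⁻¹*(t⁻¹*a*t)*t) ^ k := by
  intro h
  have h1 := hconj rel k
  rw [← h] at h1
  have h2 : t = (t⁻¹*(t⁻¹*a*t)*t) ^ (2*k) := by rw [← h1]; group
  have h3 : (t⁻¹*(t⁻¹*a*t)*t) ^ (2*k) = (t⁻¹*(t⁻¹*a*t)*t) ^ k := by rw [← h2, ← h]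
  have h4 := zpow_cancel _ h3
  have e : 2*k - k = k := by ring
  rw [e] at h4
  have ht1 : t = 1 := by rw [h, h4]
  rw [ht1] at rel
  apply ha
  have h5 : a = a * a := by rw [← rel]; group
  exact (mul_right_cancel (b := a) (by rw [← h5, one_mul])).symm

private lemma Ksq (k : ℤ) (h : t*t = (t⁻¹*(t⁻¹*a*t)*t) ^ k) :
    (t⁻¹*(t⁻¹*a*t)*t) ^ k = 1 ∧ (t⁻¹*(t⁻¹*a*t)*t) ^ (12:ℤ) = 1 := by
  have e0 : t*t = t*(t*t)*t⁻¹ := by group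
  have e1 : t*t = (t⁻¹*(t⁻¹*a*t)*t) ^ (2*k) := by
    rw [e0, h, hconj rel]
  have e2 : (t⁻¹*(t⁻¹*a*t)*t) ^ (2*k) = (t⁻¹*(t⁻¹*a*t)*t) ^ k := by rw [← e1, h]
  have e3 := zpow_cancel _ e2
  have e : 2*k - k = k := by ring
  rw [e] at e3
  refine ⟨e3, ?_⟩
  have htt : t*t = 1 := by rw [h, e3]
  have e8 : t*(t⁻¹*(t⁻¹*a*t)*t)^(4:ℤ)*t⁻¹ = (t⁻¹*(t⁻¹*a*t)*t)^(8:ℤ) := by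
    have := hconj rel (a := a) (t := t) 4; norm_num at this; exact_mod_cast this
  have e16 : t*(t⁻¹*(t⁻¹*a*t)*t)^(8:ℤ)*t⁻¹ = (t⁻¹*(t⁻¹*a*t)*t)^(16:ℤ) := by
    have := hconj rel (a := a) (t := t) 8; norm_num at this; exact_mod_cast this
  have f1 : (t*t)*(t⁻¹*(t⁻¹*a*t)*t)^(4:ℤ)*(t*t)⁻¹ = (t⁻¹*(t⁻¹*a*t)*t)^(16:ℤ) := by
    have f0 : (t*t)*(t⁻¹*(t⁻¹*a*t)*t)^(4:ℤ)*(t*t)⁻¹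
        = t*(t*(t⁻¹*(t⁻¹*a*t)*t)^(4:ℤ)*t⁻¹)*t⁻¹ := by group
    rw [f0, e8, e16]
  rw [htt] at f1
  have f2 : (t⁻¹*(t⁻¹*a*t)*t)^(4:ℤ) = (t⁻¹*(t⁻¹*a*t)*t)^(16:ℤ) := by rw [← f1]; group
  have f3 := zpow_cancel _ f2.symm
  norm_num at f3
  exact_mod_cast f3

private lemma K3 (ha7 : a ^ (7:ℤ) ≠ 1) (k : ℤ) (h : t*t*t = (t⁻¹*(t⁻¹*a*t)*t) ^ k) : False := by
  have e8 : t*(t⁻¹*(t⁻¹*a*t)*t)^(4:ℤ)*t⁻¹ = (t⁻¹*(t⁻¹*a*t)*t)^(8:ℤ) := by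
    have := hconj rel (a := a) (t := t) 4; norm_num at this; exact_mod_cast this
  have e16 : t*(t⁻¹*(t⁻¹*a*t)*t)^(8:ℤ)*t⁻¹ = (t⁻¹*(t⁻¹*a*t)*t)^(16:ℤ) := by
    have := hconj rel (a := a) (t := t) 8; norm_num at this; exact_mod_cast this
  have e32 : t*(t⁻¹*(t⁻¹*a*t)*t)^(16:ℤ)*t⁻¹ = (t⁻¹*(t⁻¹*a*t)*t)^(32:ℤ) := by
    have := hconj rel (a := a) (t := t) 16; norm_num at this; exact_mod_cast this
  have E : (t*t*t)*(t⁻¹*(t⁻¹*a*t)*t)^(4:ℤ)*(t*t*t)⁻¹ = (t⁻¹*(t⁻¹*a*t)*t)^(32:ℤ) := by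
    have E0 : (t*t*t)*(t⁻¹*(t⁻¹*a*t)*t)^(4:ℤ)*(t*t*t)⁻¹
        = t*(t*(t*(t⁻¹*(t⁻¹*a*t)*t)^(4:ℤ)*t⁻¹)*t⁻¹)*t⁻¹ := by group
    rw [E0, e8, e16, e32]
  rw [h] at E
  have E1 : (t⁻¹*(t⁻¹*a*t)*t)^k*(t⁻¹*(t⁻¹*a*t)*t)^(4:ℤ)*((t⁻¹*(t⁻¹*a*t)*t)^k)⁻¹
      = (t⁻¹*(t⁻¹*a*t)*t)^(4:ℤ) := by group
  rw [E1] at E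
  have E2 := zpow_cancel _ E
  norm_num at E2
  apply ha7
  rw [hac rel, ← zpow_mul]
  norm_num
  exact E2
end Core0

section AbstractI
variable {Q : Type*} [Group Q] [DecidableEq Q] {a t c : Q}
variable (rel : t * a * t⁻¹ = a * a) (ha : a ≠ 1)
variable (hS : c * c = t⁻¹ * a * t) (hA : a = c ^ (4:ℤ))
variable (hCJ : ∀ k : ℤ, t * c ^ k * t⁻¹ = c ^ (2*k))

private lemma zpow_cancel' (c : Q) {m n : ℤ} (h : c ^ m = c ^ n) : c ^ (m - n) = 1 := by
  rw [zpow_sub, h]; group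

include hCJ in
private lemma hCJ' (k : ℤ) : t⁻¹ * c ^ (2*k) * t = c ^ k := by
  rw [← hCJ k]; group

include hA ha in
private lemma hC4' : c ^ (4:ℤ) = 1 → False := fun h => ha (by rw [hA, h])

include hA ha in
private lemma hC2' : c ^ (2:ℤ) = 1 → False := by
  intro h
  apply hC4' ha hA
  rw [show (4:ℤ) = 2*2 by norm_num, zpow_mul, h, one_zpow]

include rel ha hCJ in
private lemma Kt' (k : ℤ) : t ≠ c ^ k := by
  intro h
  have h1 := hCJ k
  rw [← h] at h1
  have h2 : t = c ^ (2*k) := by rw [← h1]; group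
  have h3 : c ^ (2*k) = c ^ k := by rw [← h2, ← h]
  have h4 := zpow_cancel' c h3
  have e : 2*k - k = k := by ring
  rw [e] at h4
  have ht1 : t = 1 := by rw [h, h4]
  rw [ht1] at rel
  apply ha
  have h5 : a = a * a := by rw [← rel]; group
  exact (mul_right_cancel (b := a) (by rw [← h5, one_mul])).symm

include hCJ in
private lemma Ksq' (k : ℤ) (h : t*t = c ^ k) : c ^ k = 1 ∧ c ^ (12:ℤ) = 1 := by
  have e0 : t*t = t*(t*t)*t⁻¹ := by group
  have e1 : t*t = c ^ (2*k) := by rw [e0, h, hCJ]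
  have e2 : c ^ (2*k) = c ^ k := by rw [← e1, h]
  have e3 := zpow_cancel' c e2
  have e : 2*k - k = k := by ring
  rw [e] at e3
  refine ⟨e3, ?_⟩
  have htt : t*t = 1 := by rw [h, e3]
  have e8 : t*c^(4:ℤ)*t⁻¹ = c^(8:ℤ) := by have := hCJ 4; norm_num at this; exact_mod_cast this
  have e16 : t*c^(8:ℤ)*t⁻¹ = c^(16:ℤ) := by have := hCJ 8; norm_num at this; exact_mod_cast this
  have f1 : (t*t)*c^(4:ℤ)*(t*t)⁻¹ = c^(16:ℤ) := by
    have f0 : (t*t)*c^(4:ℤ)*(t*t)⁻¹ = t*(t*c^(4:ℤ)*t⁻¹)*t⁻¹ := by group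
    rw [f0, e8, e16]
  rw [htt] at f1
  have f2 : c^(4:ℤ) = c^(16:ℤ) := by rw [← f1]; group
  have f3 := zpow_cancel' c f2.symm
  norm_num at f3
  exact_mod_cast f3

include hA hCJ in
private lemma K3' (ha7 : a ^ (7:ℤ) ≠ 1) (k : ℤ) (h : t*t*t = c ^ k) : False := by
  have e8 : t*c^(4:ℤ)*t⁻¹ = c^(8:ℤ) := by have := hCJ 4; norm_num at this; exact_mod_cast this
  have e16 : t*c^(8:ℤ)*t⁻¹ = c^(16:ℤ) := by have := hCJ 8; norm_num at this; exact_mod_cast this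
  have e32 : t*c^(16:ℤ)*t⁻¹ = c^(32:ℤ) := by have := hCJ 16; norm_num at this; exact_mod_cast this
  have E : (t*t*t)*c^(4:ℤ)*(t*t*t)⁻¹ = c^(32:ℤ) := by
    have E0 : (t*t*t)*c^(4:ℤ)*(t*t*t)⁻¹ = t*(t*(t*c^(4:ℤ)*t⁻¹)*t⁻¹)*t⁻¹ := by group
    rw [E0, e8, e16, e32]
  rw [h] at E
  have E1 : c^k*c^(4:ℤ)*(c^k)⁻¹ = c^(4:ℤ) := by group
  rw [E1] at E
  have E2 := zpow_cancel' c E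
  norm_num at E2
  apply ha7
  rw [hA, ← zpow_mul]
  norm_num
  exact E2

include rel hS hA in
private lemma lettersI (x : Q)
    (hx : x ∈ ({t, t⁻¹, a*t, (a*t)⁻¹, a*t⁻¹, (a*t⁻¹)⁻¹} : Finset Q)) :
    (∃ f : ℤ, (f = 0 ∨ f = 2 ∨ f = -4) ∧ x = c^(2*f)*t) ∨
    (∃ f : ℤ, (f = 0 ∨ f = -1 ∨ f = 2) ∧ x = c^(2*f)*t⁻¹) := by
  simp only [Finset.mem_insert, Finset.mem_singleton] at hx
  rcases hx with rfl|rfl|rfl|rfl|rfl|rfl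
  · exact Or.inl ⟨0, Or.inl rfl, by norm_num⟩
  · exact Or.inr ⟨0, Or.inl rfl, by norm_num⟩
  · exact Or.inl ⟨2, Or.inr (Or.inl rfl), by rw [hA]; norm_num⟩
  · refine Or.inr ⟨-1, Or.inr (Or.inl rfl), ?_⟩
    have h1 : c^(2*(-1:ℤ)) = (c*c)⁻¹ := by
      rw [show (2*(-1:ℤ)) = -2 by norm_num, zpow_neg]
      congr 1
      rw [zpow_two]
    rw [h1, hS]; group
  · exact Or.inr ⟨2, Or.inr (Or.inr rfl), by rw [hA]; norm_num⟩
  · refine Or.inl ⟨-4, Or.inr (Or.inr rfl), ?_⟩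
    have e : c^(2*(-4:ℤ)) = (a*a)⁻¹ := by
      rw [show (2*(-4:ℤ)) = (4:ℤ)*(-2) by norm_num, zpow_mul, ← hA]
      group
    rw [e, ← rel]; group
end AbstractI

section AbstractI2
variable {Q : Type*} [Group Q] [DecidableEq Q] {a t c : Q}
variable (rel : t * a * t⁻¹ = a * a) (ha : a ≠ 1) (ha7 : a ^ (7:ℤ) ≠ 1)
variable (hS : c * c = t⁻¹ * a * t) (hA : a = c ^ (4:ℤ))
variable (hCJ : ∀ k : ℤ, t * c ^ k * t⁻¹ = c ^ (2*k))

include rel ha ha7 hS hA hCJ in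
private lemma shortI (v : List Q)
    (hvw : IsWordOver ({t, t⁻¹, a*t, (a*t)⁻¹, a*t⁻¹, (a*t⁻¹)⁻¹} : Finset Q) v)
    (hvp : v.prod = c^(2:ℤ)*t⁻¹) : 3 ≤ v.length := by
  by_contra hlen
  push_neg at hlen
  rcases v with _|⟨x, _|⟨y, _|⟨z, rest⟩⟩⟩
  · -- empty word
    simp only [List.prod_nil] at hvp
    have h2 : t = (c^(2:ℤ)*t⁻¹)*t := by rw [← hvp]; group
    have h3 : t = c^(2:ℤ) := by rw [h2]; group
    exact Kt' rel ha hCJ 2 h3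
  · -- one letter
    simp only [List.prod_cons, List.prod_nil, mul_one] at hvp
    rcases lettersI rel hS hA x (hvw x (by simp)) with ⟨f, hf, rfl⟩|⟨f, hf, rfl⟩
    · -- c^(2f) * t = c^2 * t⁻¹  ⇒  t*t = c^(2-2f)
      have h1 : t*t = (c^(2*f))⁻¹*(c^(2*f)*t)*t := by group
      rw [hvp] at h1
      have hsq : t*t = c^(2-2*f) := by rw [h1]; group
      obtain ⟨hk1, hk12⟩ := Ksq' hCJ (2-2*f) hsq
      rcases hf with rfl|rfl|rfl
      · norm_num at hk1
        exact hC2' ha hA (by exact_mod_cast hk1)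
      · norm_num at hk1
        exact hC2' ha hA (by exact_mod_cast hk1)
      · norm_num at hk1
        apply hC2' ha hA
        have := zpow_cancel' c (m := (12:ℤ)) (n := (10:ℤ)) (by rw [hk12]; exact_mod_cast hk1.symm)
        norm_num at this
        exact_mod_cast this
    · -- c^(2f) * t⁻¹ = c^2 * t⁻¹
      have h1 : c^(2*f) = c^(2:ℤ) := mul_right_cancel hvp
      have h2 := zpow_cancel' c h1
      rcases hf with rfl|rfl|rfl
      · norm_num at h2
        exact hC2' ha hA (by exact_mod_cast h2)
      · norm_num at h2
        exact hC4' ha hA (by exact_mod_cast h2)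
      · norm_num at h2
        exact hC2' ha hA (by exact_mod_cast h2)
  · -- two letters
    simp only [List.prod_cons, List.prod_nil, mul_one] at hvp
    rcases lettersI rel hS hA x (hvw x (by simp)) with ⟨f, hf, rfl⟩|⟨f, hf, rfl⟩ <;>
      rcases lettersI rel hS hA y (hvw y (by simp)) with ⟨g, hg, rfl⟩|⟨g, hg, rfl⟩
    · -- (+,+) : t³ = c^(2-2f-4g)
      have h1 : c^(2*f)*(t*c^(2*g)*t⁻¹)*(t*t) = c^(2:ℤ)*t⁻¹ := by rw [← hvp]; group
      rw [hCJ] at h1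
      have h2 : t*t*t = (c^(2*f)*c^(2*(2*g)))⁻¹*(c^(2*f)*c^(2*(2*g))*(t*t))*t := by group
      rw [h1] at h2
      have h3 : t*t*t = c^(2-2*f-2*(2*g)) := by rw [h2]; group
      exact K3' hA hCJ ha7 _ h3
    · -- (+,-) : t = c^(...)
      have h1 : c^(2*f)*(t*c^(2*g)*t⁻¹) = c^(2:ℤ)*t⁻¹ := by rw [← hvp]; group
      rw [hCJ] at h1
      have h2 : t = (c^(2*f)*c^(2*(2*g)))⁻¹ * c^(2:ℤ) := by rw [h1]; group
      have h3 : t = c^(2-2*f-2*(2*g)) := by rw [h2]; group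
      exact Kt' rel ha hCJ _ h3
    · -- (-,+)
      have h1 : c^(2*f)*(t⁻¹*c^(2*g)*t) = c^(2:ℤ)*t⁻¹ := by rw [← hvp]; group
      rw [hCJ' hCJ] at h1
      have h2 : t = (c^(2*f)*c^g)⁻¹ * c^(2:ℤ) := by rw [h1]; group
      have h3 : t = c^(2-2*f-g) := by rw [h2]; group
      exact Kt' rel ha hCJ _ h3
    · -- (-,-)
      have h1 : c^(2*f)*(t⁻¹*c^(2*g)*t)*(t⁻¹*t⁻¹) = c^(2:ℤ)*t⁻¹ := by rw [← hvp]; group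
      rw [hCJ' hCJ] at h1
      have h2 : t = (c^(2:ℤ))⁻¹ * (c^(2:ℤ)*t⁻¹*(t*t)) := by group
      rw [← h1] at h2
      have h3 : t = c^(2*f+g-2) := by rw [h2]; group
      exact Kt' rel ha hCJ _ h3
  · simp only [List.length_cons] at hlen
    omega
end AbstractI2

/-- If some geodesic word has a non-geodesic (piecewise) subword, then the geodesic
language is not piecewise excluding. -/
private lemma not_pe_of_witness {G : Type*} [Group G] (A : Finset G) (w v : List G)
    (hw : IsGeodesic A w) (hv : v.Sublist w) (hvn : ¬ IsGeodesic A v) :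
    ¬ PiecewiseExcluding A (Geo A) := by
  rintro ⟨F, -, hiff⟩
  have hwo : IsWordOver A w := hw.1
  have hvo : IsWordOver A v := fun x hx => hwo x (hv.mem hx)
  have h1 : ∀ u ∈ F, ¬ List.Sublist u w := (hiff w hwo).mp hw
  have h2 : ¬ ∀ u ∈ F, ¬ List.Sublist u v := fun h => hvn ((hiff v hvo).mpr h)
  push_neg at h2
  obtain ⟨u, huF, huv⟩ := h2
  exact h1 u huF (huv.trans hv)

section CaseI
variable {Q : Type*} [Group Q] [DecidableEq Q] {a t : Q}

private lemma caseI (rel : t * a * t⁻¹ = a * a) (ha : a ≠ 1) (ha7 : a ^ (7:ℤ) ≠ 1)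
    (hgen : ∀ x : Q, x ∈ Subgroup.closure ({a, t} : Set Q)) :
    ∃ B : Finset Q, IsSymmGen B ∧ ¬ PiecewiseExcluding B (Geo B) := by
  refine ⟨({t, t⁻¹, a*t, (a*t)⁻¹, a*t⁻¹, (a*t⁻¹)⁻¹} : Finset Q), ⟨?_, ?_⟩, ?_⟩
  · -- generation
    rw [eq_top_iff]
    intro x _
    have h1 : Subgroup.closure ({a, t} : Set Q) ≤
        Subgroup.closure (({t, t⁻¹, a*t, (a*t)⁻¹, a*t⁻¹, (a*t⁻¹)⁻¹} : Finset Q) : Set Q) := by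
      rw [Subgroup.closure_le]
      intro y hy
      simp only [Set.mem_insert_iff, Set.mem_singleton_iff] at hy
      rcases hy with rfl|rfl
      · have he : y = (y*t)*t⁻¹ := by group
        rw [he]
        exact mul_mem (Subgroup.subset_closure (by simp)) (inv_mem (Subgroup.subset_closure (by simp)))
      · exact Subgroup.subset_closure (by simp)
    exact h1 (hgen x)
  · -- inverse closed
    intro x hx
    simp only [Finset.mem_insert, Finset.mem_singleton] at hx ⊢
    rcases hx with rfl|rfl|rfl|rfl|rfl|rfl <;> simp
  · -- not piecewise excluding
    obtain ⟨c, hS, hA, hCJ⟩ :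
        ∃ c : Q, c*c = t⁻¹*a*t ∧ a = c^(4:ℤ) ∧ ∀ k : ℤ, t * c ^ k * t⁻¹ = c ^ (2*k) :=
      ⟨t⁻¹*(t⁻¹*a*t)*t, hcc rel, hac rel, fun k => hconj rel k⟩
    apply not_pe_of_witness _ [t⁻¹, a*t⁻¹, t] [t⁻¹, t]
    · constructor
      · intro x hx
        simp only [List.mem_cons, List.not_mem_nil, or_false] at hx
        rcases hx with rfl|rfl|rfl <;> simp [Finset.mem_insert]
      · intro u hu hp
        have hw : ([t⁻¹, a*t⁻¹, t] : List Q).prod = c^(2:ℤ)*t⁻¹ := by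
          have h0 : ([t⁻¹, a*t⁻¹, t] : List Q).prod = (t⁻¹*a*t)*t⁻¹ := by
            simp only [List.prod_cons, List.prod_nil, mul_one]
            group
          rw [h0, ← hS]
          rw [zpow_two]
        rw [hw] at hp
        have := shortI rel ha ha7 hS hA hCJ u hu hp
        simpa using this
    · exact List.Sublist.cons₂ _ (List.Sublist.cons _ (List.Sublist.refl _))
    · rintro ⟨-, hmin⟩
      have hv1 : ([t⁻¹, t] : List Q).prod = ([] : List Q).prod := by
        simp
      have := hmin [] (by intro x hx; simp at hx) hv1.symm
      simp at this
end CaseI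

section CaseII
variable {Q : Type*} [Group Q] [DecidableEq Q] {a t : Q}
variable (rel : t * a * t⁻¹ = a * a) (ha : a ≠ 1) (h7 : a ^ (7:ℤ) = 1)

include rel in
private lemma conjA (k : ℤ) : t * a ^ k * t⁻¹ = a ^ (2*k) := by
  calc t * a ^ k * t⁻¹ = (t * a * t⁻¹) ^ k := by rw [conj_zpow]
    _ = (a*a) ^ k := by rw [rel]
    _ = a ^ (2*k) := by rw [← zpow_two, ← zpow_mul]

include rel h7 in
private lemma hsa : t⁻¹ * a * t = a ^ (4:ℤ) := by
  have hs2' : (t⁻¹*a*t) * (t⁻¹*a*t) = a := hs2 rel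
  have hs7 : (t⁻¹*a*t) ^ (7:ℤ) = 1 := by
    have e : (t⁻¹*a*t) ^ (7:ℤ) = t⁻¹ * a ^ (7:ℤ) * t := by
      rw [show t⁻¹*a*t = t⁻¹*a*(t⁻¹)⁻¹ by group, conj_zpow]
      group
    rw [e, h7]; group
  have e8 : (t⁻¹*a*t) ^ (8:ℤ) = t⁻¹*a*t := by
    have e : (t⁻¹*a*t) ^ (8:ℤ) = (t⁻¹*a*t) ^ (7:ℤ) * (t⁻¹*a*t) := by
      rw [show (8:ℤ) = 7+1 by norm_num, zpow_add_one]
    rw [e, hs7, one_mul]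
  have e8' : ((t⁻¹*a*t) * (t⁻¹*a*t)) ^ (4:ℤ) = (t⁻¹*a*t) ^ (8:ℤ) := by
    rw [← zpow_two, ← zpow_mul]
    norm_num
  rw [← e8, ← e8', hs2']

include rel h7 in
private lemma hconjA' (k : ℤ) : t⁻¹ * a ^ k * t = a ^ (4*k) := by
  calc t⁻¹ * a ^ k * t = (t⁻¹ * a * t) ^ k := by
        rw [show t⁻¹*a*t = t⁻¹*a*(t⁻¹)⁻¹ by group, conj_zpow]; group
    _ = (a ^ (4:ℤ)) ^ k := by rw [hsa rel h7]
    _ = a ^ (4*k) := by rw [← zpow_mul]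

include rel ha in
private lemma KtA (k : ℤ) : t ≠ a ^ k := by
  intro h
  have h1 : t * a * t⁻¹ = a := by rw [h]; group
  rw [rel] at h1
  exact ha (mul_right_cancel (b := a) (by rw [h1, one_mul]))

-- power collapses using a^7 = 1
include ha h7 in
private lemma P1 : a ^ (1:ℤ) = 1 → False := by intro h; apply ha; simpa using h
include ha h7 in
private lemma P2 : a ^ (2:ℤ) = 1 → False := by
  intro h
  apply ha
  have e : a = a^(7:ℤ)*(a^(2:ℤ))⁻¹*(a^(2:ℤ))⁻¹*(a^(2:ℤ))⁻¹ := by group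
  rw [h7, h] at e
  simpa using e
include ha h7 in
private lemma P3 : a ^ (3:ℤ) = 1 → False := by
  intro h
  apply ha
  have e : a = a^(7:ℤ)*(a^(3:ℤ))⁻¹*(a^(3:ℤ))⁻¹ := by group
  rw [h7, h] at e
  simpa using e
include ha h7 in
private lemma P4 : a ^ (4:ℤ) = 1 → False := by
  intro h
  apply ha
  have e : a = a^(4:ℤ)*a^(4:ℤ)*(a^(7:ℤ))⁻¹ := by group
  rw [h7, h] at e
  simpa using e
include ha h7 in
private lemma P5 : a ^ (5:ℤ) = 1 → False := by
  intro h
  apply ha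
  have e : a = a^(5:ℤ)*a^(5:ℤ)*a^(5:ℤ)*(a^(7:ℤ))⁻¹*(a^(7:ℤ))⁻¹ := by group
  rw [h7, h] at e
  simpa using e

include rel ha h7 in
private lemma Kt2A (k : ℤ) (h : t*t = a ^ k) : False := by
  have e0 : t*t = t*(t*t)*t⁻¹ := by group
  have e1 : t*t = a ^ (2*k) := by rw [e0, h, conjA rel]
  have e2 : a ^ (2*k) = a ^ k := by rw [← e1, h]
  have e3 : a ^ k = 1 := by
    have := zpow_cancel' a e2
    have e : 2*k - k = k := by ring
    rwa [e] at this
  have htt : t*t = 1 := by rw [h, e3]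
  have c2 : t*a^(2:ℤ)*t⁻¹ = a^(4:ℤ) := by have := conjA rel (a := a) (t := t) 2; norm_num at this; exact_mod_cast this
  have c1 : t*a*t⁻¹ = a^(2:ℤ) := by have := conjA rel (a := a) (t := t) 1; norm_num at this; exact_mod_cast this
  have f1 : (t*t)*a*(t*t)⁻¹ = a^(4:ℤ) := by
    have f0 : (t*t)*a*(t*t)⁻¹ = t*(t*a*t⁻¹)*t⁻¹ := by group
    rw [f0, c1, c2]
  rw [htt] at f1
  have f2 : a^(1:ℤ) = a^(4:ℤ) := by rw [zpow_one, ← f1]; group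
  have f3 := zpow_cancel' a f2.symm
  norm_num at f3
  exact P3 ha h7 (by exact_mod_cast f3)
end CaseII

section CaseII2
variable {Q : Type*} [Group Q] [DecidableEq Q] {a t : Q}
variable (rel : t * a * t⁻¹ = a * a) (ha : a ≠ 1) (h7 : a ^ (7:ℤ) = 1)

include rel ha h7 in
private lemma shortII (v : List Q)
    (hvw : IsWordOver ({t, t⁻¹, a^(3:ℤ), a^(4:ℤ)} : Finset Q) v)
    (hvp : v.prod = a^(5:ℤ)) : 3 ≤ v.length := by
  have hlet : ∀ x ∈ ({t, t⁻¹, a^(3:ℤ), a^(4:ℤ)} : Finset Q),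
      x = t ∨ x = t⁻¹ ∨ ∃ e : ℤ, (e = 3 ∨ e = 4) ∧ x = a^e := by
    intro x hx
    simp only [Finset.mem_insert, Finset.mem_singleton] at hx
    rcases hx with rfl|rfl|rfl|rfl
    · exact Or.inl rfl
    · exact Or.inr (Or.inl rfl)
    · exact Or.inr (Or.inr ⟨3, Or.inl rfl, rfl⟩)
    · exact Or.inr (Or.inr ⟨4, Or.inr rfl, rfl⟩)
  by_contra hlen
  push_neg at hlen
  rcases v with _|⟨x, _|⟨y, _|⟨z, rest⟩⟩⟩
  · simp only [List.prod_nil] at hvp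
    exact P5 ha h7 hvp.symm
  · simp only [List.prod_cons, List.prod_nil, mul_one] at hvp
    rcases hlet x (hvw x (by simp)) with heq|heq|⟨e, he, heq⟩ <;> rw [heq] at hvp
    · exact KtA rel ha 5 hvp
    · apply KtA rel ha (-5)
      rw [← inv_inv t, hvp, ← zpow_neg]
    · have h1 := zpow_cancel' a hvp
      rcases he with rfl|rfl
      · norm_num at h1
        exact P2 ha h7 (by exact_mod_cast h1)
      · norm_num at h1
        exact ha h1
  · simp only [List.prod_cons, List.prod_nil, mul_one] at hvp
    rcases hlet x (hvw x (by simp)) with heq|heq|⟨e, he, heq⟩ <;> rw [heq] at hvp <;>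
      [rcases hlet y (hvw y (by simp)) with hf|hf|⟨f, hf', hf⟩;
       rcases hlet y (hvw y (by simp)) with hf|hf|⟨f, hf', hf⟩;
       rcases hlet y (hvw y (by simp)) with hf|hf|⟨f, hf', hf⟩] <;> rw [hf] at hvp
    · exact Kt2A rel ha h7 5 hvp
    · have h1 : (1:Q) = a^(5:ℤ) := by rw [← hvp]; group
      exact P5 ha h7 h1.symm
    · have h2 : t = a^(5:ℤ)*(a^f)⁻¹ := by rw [← hvp]; group
      have h3 : t = a^(5 + -f) := by rw [h2, ← zpow_neg, ← zpow_add]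
      exact KtA rel ha _ h3
    · have h1 : (1:Q) = a^(5:ℤ) := by rw [← hvp]; group
      exact P5 ha h7 h1.symm
    · apply Kt2A rel ha h7 (-5)
      have h2 : t*t = (a^(5:ℤ))⁻¹ := by rw [← hvp]; simp [mul_inv_rev]
      rw [h2, ← zpow_neg]
    · have h2 : t = a^f*(a^(5:ℤ))⁻¹ := by rw [← hvp]; group
      have h3 : t = a^(f + -5) := by rw [h2, ← zpow_neg, ← zpow_add]
      exact KtA rel ha _ h3
    · have h2 : t = (a^e)⁻¹*a^(5:ℤ) := by rw [← hvp]; group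
      have h3 : t = a^(-e + 5) := by rw [h2, ← zpow_neg, ← zpow_add]
      exact KtA rel ha _ h3
    · have h2 : t = (a^(5:ℤ))⁻¹*a^e := by rw [← hvp]; group
      have h3 : t = a^(-5 + e) := by rw [h2, ← zpow_neg, ← zpow_add]
      exact KtA rel ha _ h3
    · have h2 : a^(e+f) = a^(5:ℤ) := by rw [zpow_add]; exact hvp
      have h3 := zpow_cancel' a h2
      rcases he with rfl|rfl <;> rcases hf' with rfl|rfl <;> norm_num at h3
      · exact ha h3
      · exact P2 ha h7 (by exact_mod_cast h3)
      · exact P2 ha h7 (by exact_mod_cast h3)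
      · exact P3 ha h7 (by exact_mod_cast h3)
  · simp only [List.length_cons] at hlen
    omega

include rel ha h7 in
private lemma caseII (hgen : ∀ x : Q, x ∈ Subgroup.closure ({a, t} : Set Q)) :
    ∃ B : Finset Q, IsSymmGen B ∧ ¬ PiecewiseExcluding B (Geo B) := by
  have hinv3 : (a^(3:ℤ))⁻¹ = a^(4:ℤ) := by
    have e : (a^(3:ℤ))⁻¹ = a^(4:ℤ)*(a^(7:ℤ))⁻¹ := by group
    rw [e, h7, inv_one, mul_one]
  have hinv4 : (a^(4:ℤ))⁻¹ = a^(3:ℤ) := by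
    have e : (a^(4:ℤ))⁻¹ = a^(3:ℤ)*(a^(7:ℤ))⁻¹ := by group
    rw [e, h7, inv_one, mul_one]
  refine ⟨({t, t⁻¹, a^(3:ℤ), a^(4:ℤ)} : Finset Q), ⟨?_, ?_⟩, ?_⟩
  · rw [eq_top_iff]
    intro x _
    have h1 : Subgroup.closure ({a, t} : Set Q) ≤
        Subgroup.closure (({t, t⁻¹, a^(3:ℤ), a^(4:ℤ)} : Finset Q) : Set Q) := by
      rw [Subgroup.closure_le]
      intro y hy
      simp only [Set.mem_insert_iff, Set.mem_singleton_iff] at hy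
      rcases hy with rfl|rfl
      · have he : y = y^(4:ℤ)*(y^(3:ℤ))⁻¹ := by group
        have hm : y^(4:ℤ)*(y^(3:ℤ))⁻¹ ∈
            Subgroup.closure (({t, t⁻¹, y^(3:ℤ), y^(4:ℤ)} : Finset Q) : Set Q) :=
          mul_mem (Subgroup.subset_closure (by simp))
            (inv_mem (Subgroup.subset_closure (by simp)))
        rwa [← he] at hm
      · exact Subgroup.subset_closure (by simp)
    exact h1 (hgen x)
  · intro x hx
    simp only [Finset.mem_insert, Finset.mem_singleton] at hx ⊢
    rcases hx with rfl|rfl|rfl|rfl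
    · simp
    · simp
    · rw [hinv3]; simp
    · rw [hinv4]; simp
  · apply not_pe_of_witness _ [t⁻¹, a^(3:ℤ), t] [t⁻¹, t]
    · constructor
      · intro x hx
        simp only [List.mem_cons, List.not_mem_nil, or_false] at hx
        rcases hx with rfl|rfl|rfl <;> simp [Finset.mem_insert]
      · intro u hu hp
        have hw : ([t⁻¹, a^(3:ℤ), t] : List Q).prod = a^(5:ℤ) := by
          have h0 : ([t⁻¹, a^(3:ℤ), t] : List Q).prod = t⁻¹*a^(3:ℤ)*t := by
            simp only [List.prod_cons, List.prod_nil, mul_one]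
            group
          rw [h0, hconjA' rel h7]
          have e : a^(4*3:ℤ) = a^(5:ℤ)*a^(7:ℤ) := by norm_num; group
          rw [e, h7, mul_one]
        rw [hw] at hp
        have := shortII rel ha h7 u hu hp
        simpa using this
    · exact List.Sublist.cons₂ _ (List.Sublist.cons _ (List.Sublist.refl _))
    · rintro ⟨-, hmin⟩
      have hv1 : ([t⁻¹, t] : List Q).prod = ([] : List Q).prod := by simp
      have := hmin [] (by intro x hx; simp at hx) hv1.symm
      simp at this
end CaseII2

/-- Every proper quotient of `BS(1,2)` is either abelian or has a finite symmetric
generating set whose geodesic language is not piecewise excluding. -/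
theorem bs12_proper_quotients
    (N : Subgroup (PresentedGroup bs12Rels)) [N.Normal] (hN : N ≠ ⊥) :
    (∀ x y : PresentedGroup bs12Rels ⧸ N, x * y = y * x) ∨
    ∃ B : Finset (PresentedGroup bs12Rels ⧸ N),
      IsSymmGen B ∧ ¬ PiecewiseExcluding B (Geo B) := by
  classical
  set G := PresentedGroup bs12Rels with hG
  let π : G →* G ⧸ N := QuotientGroup.mk' N
  set a : G ⧸ N := π (PresentedGroup.of 0) with ha_def
  set t : G ⧸ N := π (PresentedGroup.of 1) with ht_def
  -- the defining relation in G
  have hrelG : (PresentedGroup.of 1 : G) * PresentedGroup.of 0 * (PresentedGroup.of 1)⁻¹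
      = PresentedGroup.of 0 * PresentedGroup.of 0 := by
    have hr : (FreeGroup.of 1 * FreeGroup.of 0 * (FreeGroup.of 1)⁻¹ * ((FreeGroup.of 0) ^ 2)⁻¹)
        ∈ bs12Rels := rfl
    have h1 : PresentedGroup.mk bs12Rels
        (FreeGroup.of 1 * FreeGroup.of 0 * (FreeGroup.of 1)⁻¹ * ((FreeGroup.of 0) ^ 2)⁻¹) = 1 :=
      (QuotientGroup.eq_one_iff _).mpr (Subgroup.subset_normalClosure hr)
    rw [map_mul, map_mul, map_inv, map_inv, map_pow] at h1
    have h2 : (PresentedGroup.of 1 : G) * PresentedGroup.of 0 * (PresentedGroup.of 1)⁻¹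
        = (PresentedGroup.of 0 : G) ^ 2 := by
      have := mul_inv_eq_one.mp h1
      exact this
    rw [h2, pow_two]
  have rel : t * a * t⁻¹ = a * a := by
    rw [ha_def, ht_def, ← map_inv, ← map_mul, ← map_mul, ← map_mul, hrelG]
  -- generation
  have hgen : ∀ x : G ⧸ N, x ∈ Subgroup.closure ({a, t} : Set (G ⧸ N)) := by
    intro x
    obtain ⟨g, hg⟩ := QuotientGroup.mk'_surjective N x
    have hmem : g ∈ (Subgroup.closure ({a, t} : Set (G ⧸ N))).comap π := by
      apply PresentedGroup.generated_by
      intro j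
      fin_cases j
      · exact Subgroup.subset_closure (Set.mem_insert _ _)
      · exact Subgroup.subset_closure (Set.mem_insert_of_mem _ rfl)
    rw [← hg]
    exact hmem
  by_cases habel : a = 1
  · -- abelian case: everything is a power of t
    left
    have hz : ∀ x : G ⧸ N, x ∈ Subgroup.zpowers t := by
      intro x
      obtain ⟨g, hg⟩ := QuotientGroup.mk'_surjective N x
      have hmem : g ∈ (Subgroup.zpowers t).comap π := by
        apply PresentedGroup.generated_by
        intro j
        fin_cases j
        · rw [Subgroup.mem_comap]
          show π (PresentedGroup.of (0 : Fin 2)) ∈ Subgroup.zpowers t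
          have h0 : π (PresentedGroup.of (0 : Fin 2)) = 1 := habel
          rw [h0]
          exact one_mem _
        · exact Subgroup.mem_zpowers t
      rw [← hg]
      exact hmem
    intro x y
    obtain ⟨m, hm⟩ := hz x
    obtain ⟨n, hn⟩ := hz y
    rw [← hm, ← hn, ← zpow_add, ← zpow_add, add_comm]
  · right
    by_cases h7 : a ^ (7:ℤ) = 1
    · exact caseII rel habel h7 hgen
    · exact caseI rel habel h7 hgen
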